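/- Let N ≥ 1, let O ⊆ ℝ^N be open, and let γ > 0, M > 0, β > 0. Let d : O → ℝ be of class C² with ‖∇d(x)‖ = 1, |Δ(d²)(x)| ≤ M and d(x) ≥ γ for every x ∈ O. Define u : O → ℝ by u(x) := β (exp(−M (d(x)² − 4γ²) / (4γ²)) − 1). Then Δu(x) ≥ 0 for every x ∈ O, i.e. u is subharmonic on O. -/

import Mathlib

open Metric Set

/-- The Laplacian of `f : ℝ^N → ℝ` at `x`, as the sum of the second partial
derivatives along the coordinate directions. -/
noncomputable def lapl {N : ℕ} (f : EuclideanSpace ℝ (Fin N) → ℝ)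
    (x : EuclideanSpace ℝ (Fin N)) : ℝ :=
  ∑ i : Fin N,
    fderiv ℝ (fun y => fderiv ℝ f y (EuclideanSpace.single i 1)) x (EuclideanSpace.single i 1)

set_option maxHeartbeats 2000000 in
theorem stmt3 (N : ℕ) (hN : 1 ≤ N) (O : Set (EuclideanSpace ℝ (Fin N)))
    (hO : IsOpen O) (γ M β : ℝ) (hγ : 0 < γ) (hM : 0 < M) (hβ : 0 < β)
    (d : EuclideanSpace ℝ (Fin N) → ℝ) (hd : ContDiffOn ℝ 2 d O)
    (hgrad : ∀ x ∈ O, ‖gradient d x‖ = 1)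
    (hlapd2 : ∀ x ∈ O, |lapl (fun y => d y ^ 2) x| ≤ M)
    (hdγ : ∀ x ∈ O, γ ≤ d x) :
    ∀ x ∈ O,
      0 ≤ lapl (fun y => β * (Real.exp (-M * (d y ^ 2 - 4 * γ ^ 2) / (4 * γ ^ 2)) - 1)) x := by
  intro x hx
  have h4 : (0:ℝ) < 4 * γ ^ 2 := by positivity
  have h4' : (4:ℝ) * γ ^ 2 ≠ 0 := ne_of_gt h4
  set c : ℝ := M / (4 * γ ^ 2) with hc
  have hcpos : 0 < c := by positivity
  set ℓ : ℝ → ℝ := fun t => -M * (t - 4 * γ ^ 2) / (4 * γ ^ 2) with hℓdef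
  have hℓ : ∀ t : ℝ, HasDerivAt ℓ (-c) t := by
    intro t
    have h := (((hasDerivAt_id t).sub_const (4 * γ ^ 2)).const_mul (-M)).div_const (4 * γ ^ 2)
    refine HasDerivAt.congr_deriv (f := ℓ) h ?_
    rw [hc]; field_simp
  set φ' : ℝ → ℝ := fun t => β * -c * Real.exp (ℓ t) with hφ'def
  set φ'' : ℝ → ℝ := fun t => β * c ^ 2 * Real.exp (ℓ t) with hφ''def
  have hφ : ∀ t : ℝ, HasDerivAt (fun t => β * (Real.exp (ℓ t) - 1)) (φ' t) t := by
    intro t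
    have h2 := ((Real.hasDerivAt_exp _).comp t (hℓ t)).sub_const 1 |>.const_mul β
    refine HasDerivAt.congr_deriv (f := fun t => β * (Real.exp (ℓ t) - 1)) h2 ?_
    simp [hφ'def, Function.comp]
    ring
  have hφ' : ∀ t : ℝ, HasDerivAt φ' (φ'' t) t := by
    intro t
    have h2 := ((Real.hasDerivAt_exp _).comp t (hℓ t)).const_mul (β * -c)
    refine HasDerivAt.congr_deriv (f := φ') h2 ?_
    simp [hφ''def, Function.comp]
    ring
  set e : Fin N → EuclideanSpace ℝ (Fin N) := fun i => EuclideanSpace.single i 1 with he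
  set u : EuclideanSpace ℝ (Fin N) → ℝ :=
    fun y => β * (Real.exp (-M * (d y ^ 2 - 4 * γ ^ 2) / (4 * γ ^ 2)) - 1) with hu
  set g : EuclideanSpace ℝ (Fin N) → ℝ := fun y => d y ^ 2 with hg
  -- basic differentiability facts
  have hdO : ∀ y ∈ O, HasFDerivAt d (fderiv ℝ d y) y := fun y hy =>
    ((hd.contDiffAt (hO.mem_nhds hy)).differentiableAt two_ne_zero).hasFDerivAt
  have hsq : ∀ y ∈ O, HasFDerivAt g ((2 * d y) • fderiv ℝ d y) y := by
    intro y hy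
    have h := (hdO y hy).mul (hdO y hy)
    have hfun : g = fun z => d z * d z := by funext z; rw [hg]; ring
    rw [hfun]
    refine HasFDerivAt.congr_fderiv h ?_
    rw [two_mul, add_smul]
  have huO : ∀ y ∈ O, HasFDerivAt u ((φ' (d y ^ 2)) • ((2 * d y) • fderiv ℝ d y)) y := by
    intro y hy
    have := (hφ (d y ^ 2)).comp_hasFDerivAt y (hsq y hy); exact this
  have hDd : DifferentiableAt ℝ (fun y => fderiv ℝ d y) x :=
    ((hd.fderiv_of_isOpen (m := 1) hO (by norm_num)).differentiableOn one_ne_zero).differentiableAt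
      (hO.mem_nhds hx)
  have hCi : ∀ i : Fin N, DifferentiableAt ℝ (fun y => fderiv ℝ d y (e i)) x := fun i =>
    hDd.clm_apply (differentiableAt_const _)
  -- eventual formulas for the first derivatives
  have E2 : ∀ i : Fin N, (fun y => fderiv ℝ u y (e i)) =ᶠ[nhds x]
      (fun y => φ' (d y ^ 2) * (2 * d y) * fderiv ℝ d y (e i)) := by
    intro i
    filter_upwards [hO.mem_nhds hx] with y hy
    rw [(huO y hy).fderiv]
    simp [mul_assoc]
  have E1 : ∀ i : Fin N, (fun y => fderiv ℝ g y (e i)) =ᶠ[nhds x]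
      (fun y => (2 * d y) * fderiv ℝ d y (e i)) := by
    intro i
    filter_upwards [hO.mem_nhds hx] with y hy
    rw [(hsq y hy).fderiv]
    simp
  -- second derivative facts at x
  have hdx := hdO x hx
  have hAx : HasFDerivAt (fun y => φ' (d y ^ 2))
      ((φ'' (d x ^ 2)) • ((2 * d x) • fderiv ℝ d x)) x :=
    by have := (hφ' (d x ^ 2)).comp_hasFDerivAt x (hsq x hx); exact this
  have hBx : HasFDerivAt (fun y => 2 * d y) ((2:ℝ) • fderiv ℝ d x) x := hdx.const_mul 2
  have hPx := hAx.mul hBx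
  have hhi : ∀ i : Fin N, HasFDerivAt (fun y => φ' (d y ^ 2) * (2 * d y) * fderiv ℝ d y (e i))
      ((φ' (d x ^ 2) * (2 * d x)) • fderiv ℝ (fun y => fderiv ℝ d y (e i)) x
        + (fderiv ℝ d x (e i)) • ((φ' (d x ^ 2)) • ((2:ℝ) • fderiv ℝ d x)
          + (2 * d x) • ((φ'' (d x ^ 2)) • ((2 * d x) • fderiv ℝ d x)))) x := fun i =>
    hPx.mul (hCi i).hasFDerivAt
  have hGi : ∀ i : Fin N, HasFDerivAt (fun y => (2 * d y) * fderiv ℝ d y (e i))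
      ((2 * d x) • fderiv ℝ (fun y => fderiv ℝ d y (e i)) x
        + (fderiv ℝ d x (e i)) • ((2:ℝ) • fderiv ℝ d x)) x := fun i =>
    hBx.mul (hCi i).hasFDerivAt
  -- key pointwise identity for the summands of the Laplacian
  have key : ∀ i : Fin N, fderiv ℝ (fun y => fderiv ℝ u y (e i)) x (e i)
      = φ' (d x ^ 2) * fderiv ℝ (fun y => fderiv ℝ g y (e i)) x (e i)
        + 4 * d x ^ 2 * φ'' (d x ^ 2) * (fderiv ℝ d x (e i)) ^ 2 := by
    intro i
    rw [(E2 i).fderiv_eq, (E1 i).fderiv_eq, (hhi i).fderiv, (hGi i).fderiv]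
    simp only [ContinuousLinearMap.add_apply, ContinuousLinearMap.coe_smul', Pi.smul_apply,
      smul_eq_mul]
    ring
  -- Parseval: the squared gradient components sum to 1
  have hS : ∑ i : Fin N, (fderiv ℝ d x (e i)) ^ 2 = 1 := by
    have hw : ∀ v, fderiv ℝ d x v = inner ℝ (gradient d x) v := by
      intro v
      rw [gradient, InnerProductSpace.toDual_symm_apply]
    have h1 : ∀ i : Fin N, fderiv ℝ d x (e i) = gradient d x i := by
      intro i
      rw [he, hw, real_inner_comm, EuclideanSpace.inner_single_left]
      simp
    simp_rw [h1]
    have hn := EuclideanSpace.norm_eq (gradient d x)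
    rw [hgrad x hx] at hn
    have h2 : ∑ i, ‖gradient d x i‖ ^ 2 = 1 := by
      nlinarith [Real.sq_sqrt (show (0:ℝ) ≤ ∑ i, ‖gradient d x i‖ ^ 2 by positivity), hn]
    simpa [Real.norm_eq_abs, sq_abs] using h2
  -- assemble the Laplacian formula
  have hlapl : lapl u x = φ' (d x ^ 2) * lapl g x + 4 * d x ^ 2 * φ'' (d x ^ 2) := by
    unfold lapl
    calc ∑ i : Fin N, fderiv ℝ (fun y => fderiv ℝ u y (e i)) x (e i)
        = ∑ i : Fin N, (φ' (d x ^ 2) * fderiv ℝ (fun y => fderiv ℝ g y (e i)) x (e i)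
            + 4 * d x ^ 2 * φ'' (d x ^ 2) * (fderiv ℝ d x (e i)) ^ 2) :=
          Finset.sum_congr rfl fun i _ => key i
      _ = φ' (d x ^ 2) * (∑ i : Fin N, fderiv ℝ (fun y => fderiv ℝ g y (e i)) x (e i))
            + 4 * d x ^ 2 * φ'' (d x ^ 2) * ∑ i : Fin N, (fderiv ℝ d x (e i)) ^ 2 := by
          rw [Finset.sum_add_distrib, Finset.mul_sum, Finset.mul_sum]
      _ = φ' (d x ^ 2) * lapl g x + 4 * d x ^ 2 * φ'' (d x ^ 2) := by rw [hS, mul_one]; rfl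
  -- conclude
  have hL := abs_le.mp (hlapd2 x hx)
  have hE : 0 < Real.exp (ℓ (d x ^ 2)) := Real.exp_pos _
  have hγd : γ ^ 2 ≤ d x ^ 2 := by nlinarith [hdγ x hx]
  have hMc : M ≤ 4 * d x ^ 2 * c := by
    have : 4 * γ ^ 2 * c = M := by rw [hc]; field_simp
    nlinarith
  have hmain : 0 ≤ (β * Real.exp (ℓ (d x ^ 2)) * c) * (4 * d x ^ 2 * c - lapl g x) :=
    mul_nonneg (by positivity) (by linarith [hL.2])
  show (0:ℝ) ≤ lapl u x
  rw [hlapl, hφ'def, hφ''def]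
  beta_reduce
  nlinarith [hmain]
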